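/- For a prime p and a finite group G, p does not divide the order of G if and only if the map ℤ/pℤ → 0 has the left lifting property with respect to the map G → 0. -/

import Mathlib

/-- Quillen lifting property: `f ⧄ g`. -/
def Lifts {A B X Y : Type*} [Group A] [Group B] [Group X] [Group Y]
    (f : A →* B) (g : X →* Y) : Prop :=
  ∀ (i : A →* X) (j : B →* Y), g.comp i = j.comp f →
    ∃ h : B →* X, h.comp f = i ∧ g.comp h = j
theorem stmt8 {G : Type*} [Group G] [Finite G] (p : ℕ) (hp : p.Prime) :
    ¬ p ∣ Nat.card G ↔
      Lifts (1 : Multiplicative (ZMod p) →* PUnit) (1 : G →* PUnit) := by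
  haveI := Fact.mk hp
  constructor
  · intro hnd i j _
    refine ⟨1, ?_, Subsingleton.elim _ _⟩
    refine MonoidHom.ext fun x => ?_
    have hxp : x ^ p = 1 := by
      have := pow_card_eq_one' (x := x)
      simpa [Nat.card_eq_fintype_card, ZMod.card] using this
    have h1 : orderOf (i x) ∣ p := by
      apply orderOf_dvd_of_pow_eq_one
      rw [← map_pow, hxp, map_one]
    have h2 : orderOf (i x) ∣ Nat.card G := orderOf_dvd_natCard _
    rcases (Nat.dvd_prime hp).mp h1 with h | h
    · simp [orderOf_eq_one_iff.mp h]
    · exact absurd (h ▸ h2) hnd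
  · intro hl hd
    obtain ⟨g, hg⟩ := exists_prime_orderOf_dvd_card' p hd
    have hgp : g ^ p = 1 := by rw [← hg]; exact pow_orderOf_eq_one g
    have hf : (zmultiplesHom (Additive G) (Additive.ofMul g)) p = 0 := by
      show Additive.ofMul (g ^ (p : ℤ)) = 0
      simp [hgp]
    let φ : ZMod p →+ Additive G := ZMod.lift p ⟨zmultiplesHom (Additive G) (Additive.ofMul g), hf⟩
    let i : Multiplicative (ZMod p) →* G := AddMonoidHom.toMultiplicativeLeft φ
    obtain ⟨h, hh, -⟩ := hl i 1 (by ext x)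
    have h1 : h = 1 := by ext x; exact map_one h
    have hone : i (Multiplicative.ofAdd (1 : ZMod p)) = 1 := by
      rw [← hh, h1]; rfl
    have hφ : φ (1 : ZMod p) = Additive.ofMul g := by
      have := ZMod.lift_coe (n := p) ⟨zmultiplesHom (Additive G) (Additive.ofMul g), hf⟩ 1
      simpa [φ] using this
    have hg1 : i (Multiplicative.ofAdd (1 : ZMod p)) = g := by
      show Additive.toMul (φ (1 : ZMod p)) = g
      rw [hφ]; rfl
    have : g = 1 := hg1 ▸ hone
    rw [this, orderOf_one] at hg
    exact hp.one_lt.ne hg
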